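/- Let Ψ : ℝ → ℂ^{N_g × N} and U : ℝ → ℂ^{N × N} be differentiable, and let H : ℝ → ℂ^{N_g × N_g}. Define Φ(t) = Ψ(t) U(t) and P(t) = Ψ(t) Ψ(t)†. Assume for all t: Ψ(t)† Ψ(t) = I_N, i Ψ'(t) = H(t) Ψ(t), and i Φ'(t) = (I − P(t)) H(t) Φ(t). Then the gauge matrix satisfies i U'(t) = −(Ψ(t)† H(t) Ψ(t)) U(t) for all t. -/

import Mathlib

open Matrix
open scoped Matrix.Norms.L2Operator

lemma matrix_mul_isBoundedBilinearMap (Ng N M : ℕ) :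
    IsBoundedBilinearMap ℝ
      (fun p : Matrix (Fin Ng) (Fin N) ℂ × Matrix (Fin N) (Fin M) ℂ => p.1 * p.2) where
  add_left A A' B := Matrix.add_mul A A' B
  smul_left r A B := Matrix.smul_mul r A B
  add_right A B B' := Matrix.mul_add A B B'
  smul_right r A B := Matrix.mul_smul A r B
  bound := ⟨1, one_pos, fun A B => by simpa using Matrix.l2_opNorm_mul A B⟩

/-- **Evolution equation of the parallel transport gauge matrix.** If `Ψ` solves the
Schrödinger dynamics `i Ψ' = H Ψ` with orthonormal columns, and the gauge transform
`Φ = Ψ U` satisfies the parallel transport dynamics `i Φ' = (I − P) H Φ` with `P = Ψ Ψᴴ`,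
then `i U' = −(Ψᴴ H Ψ) U`. -/
theorem pt_gauge_matrix_evolution
    (Ng N : ℕ)
    (Ψ : ℝ → Matrix (Fin Ng) (Fin N) ℂ)
    (U : ℝ → Matrix (Fin N) (Fin N) ℂ)
    (H : ℝ → Matrix (Fin Ng) (Fin Ng) ℂ)
    (hΨ : Differentiable ℝ Ψ) (hU : Differentiable ℝ U)
    (horth : ∀ t, (Ψ t)ᴴ * Ψ t = 1)
    (heqΨ : ∀ t, Complex.I • deriv Ψ t = H t * Ψ t)
    (heqΦ : ∀ t, Complex.I • deriv (fun s => Ψ s * U s) t =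
      (1 - Ψ t * (Ψ t)ᴴ) * H t * (Ψ t * U t)) :
    ∀ t, Complex.I • deriv U t = -((Ψ t)ᴴ * H t * Ψ t * U t) := by
  intro t
  have hpair : HasDerivAt (fun s => (Ψ s, U s)) (deriv Ψ t, deriv U t) t :=
    ((hΨ t).hasDerivAt).prodMk ((hU t).hasDerivAt)
  have hbil := (matrix_mul_isBoundedBilinearMap Ng N N).hasFDerivAt (Ψ t, U t)
  have hmul : HasDerivAt (fun s => Ψ s * U s)
      (deriv Ψ t * U t + Ψ t * deriv U t) t := by
    have := hbil.comp_hasDerivAt t hpair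
    simpa [IsBoundedBilinearMap.deriv_apply, add_comm, Function.comp_def] using this
  have hd : deriv (fun s => Ψ s * U s) t = deriv Ψ t * U t + Ψ t * deriv U t :=
    hmul.deriv
  have hΦ := heqΦ t
  rw [hd, smul_add] at hΦ
  have h1 : Complex.I • (deriv Ψ t * U t) = H t * Ψ t * U t := by
    rw [← Matrix.smul_mul, heqΨ t]
  rw [h1] at hΦ
  have h2 : Ψ t * (Complex.I • deriv U t) = -(Ψ t * ((Ψ t)ᴴ * (H t * (Ψ t * U t)))) := by
    have : Complex.I • (Ψ t * deriv U t) = Ψ t * (Complex.I • deriv U t) := by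
      rw [Matrix.mul_smul]
    rw [← this]
    have expand : (1 - Ψ t * (Ψ t)ᴴ) * H t * (Ψ t * U t)
        = H t * Ψ t * U t - Ψ t * ((Ψ t)ᴴ * (H t * (Ψ t * U t))) := by
      simp [Matrix.sub_mul, Matrix.mul_assoc]
    rw [expand] at hΦ
    linear_combination (norm := noncomm_ring) hΦ
  have h3 := congrArg (fun X => (Ψ t)ᴴ * X) h2
  simp only [Matrix.mul_neg, ← Matrix.mul_assoc, horth t, Matrix.one_mul] at h3
  rw [← h3]
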